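/- arXiv:1205.5837 — 2 statements merged into one kernel-verified Lean document; each statement's English description precedes it below -/
import Mathlib

section
/- Let f : X → X be a map on a complete metric ball B̄(x₀, δ) in a Banach space depending on a parameter y in a ball B(y₀, r) of another Banach space, such that f(·, y) is a uniform contraction with constant k < 1 and y ↦ f(x, y) is analytic for each x, with f analytic jointly. Then the unique fixed point x*(y) depends analytically on y. -/
set_option maxHeartbeats 1000000

open Metric Set Filter Topology ContinuousLinearMap

/-- uniform contraction principle with analytic dependence on the
parameter: if `f` maps `closedBall x₀ δ × ball y₀ r` into `closedBall x₀ δ`, is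
analytic (jointly) there, and is a uniform contraction with constant `k < 1` in the
first variable, then the unique fixed point `x*(y)` depends analytically on `y`. -/
theorem uniform_contraction_fixed_point_analytic
    {X Y : Type*} [NormedAddCommGroup X] [NormedSpace ℂ X] [CompleteSpace X]
    [NormedAddCommGroup Y] [NormedSpace ℂ Y] [CompleteSpace Y]
    (x₀ : X) (y₀ : Y) (δ r k : ℝ) (hδ : 0 < δ) (hr : 0 < r)
    (hk0 : 0 ≤ k) (hk : k < 1)
    (f : X × Y → X)
    (hmaps : ∀ x ∈ closedBall x₀ δ, ∀ y ∈ ball y₀ r, f (x, y) ∈ closedBall x₀ δ)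
    (hf : AnalyticOnNhd ℂ f (closedBall x₀ δ ×ˢ ball y₀ r))
    (hcontr : ∀ x₁ ∈ closedBall x₀ δ, ∀ x₂ ∈ closedBall x₀ δ, ∀ y ∈ ball y₀ r,
      ‖f (x₁, y) - f (x₂, y)‖ ≤ k * ‖x₁ - x₂‖) :
    ∃ fix : Y → X,
      (∀ y ∈ ball y₀ r,
        fix y ∈ closedBall x₀ δ ∧ f (fix y, y) = fix y ∧
        ∀ x ∈ closedBall x₀ δ, f (x, y) = x → x = fix y) ∧
      AnalyticOnNhd ℂ fix (ball y₀ r) := by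
  have hK : k < 1 := hk
  set K : NNReal := ⟨k, hk0⟩ with hKdef
  -- existence of the fixed point for each parameter value
  have hex : ∀ y ∈ ball y₀ r, ∃ x ∈ closedBall x₀ δ, f (x, y) = x := by
    intro y hy
    have hsc : IsComplete (closedBall x₀ δ) := Metric.isClosed_closedBall.isComplete
    have hsf : MapsTo (fun x => f (x, y)) (closedBall x₀ δ) (closedBall x₀ δ) :=
      fun x hx => hmaps x hx y hy
    have hlip : LipschitzOnWith K (fun x => f (x, y)) (closedBall x₀ δ) := by
      apply LipschitzOnWith.of_dist_le_mul
      intro x₁ h1 x₂ h2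
      simp only [dist_eq_norm]; exact hcontr x₁ h1 x₂ h2 y hy
    have hcw : ContractingWith K (hsf.restrict _ _ _) :=
      ⟨by exact_mod_cast hk, hlip.mapsToRestrict hsf⟩
    obtain ⟨z, hz, hfz, -, -⟩ := hcw.exists_fixedPoint' hsc hsf
      (mem_closedBall_self hδ.le) (edist_ne_top _ _)
    exact ⟨z, hz, hfz⟩
  choose! fix hfixmem hfixeq using hex
  -- uniqueness
  have huniq : ∀ y ∈ ball y₀ r, ∀ x ∈ closedBall x₀ δ, f (x, y) = x → x = fix y := by
    intro y hy x hx hfx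
    have h := hcontr x hx (fix y) (hfixmem y hy) y hy
    rw [hfx, hfixeq y hy] at h
    by_contra hne
    have hpos : 0 < ‖x - fix y‖ := by
      simpa [sub_eq_zero, norm_pos_iff] using hne
    nlinarith
  refine ⟨fix, fun y hy => ⟨hfixmem y hy, hfixeq y hy, huniq y hy⟩, ?_⟩
  -- continuity of the fixed point map on the ball
  have hcontfix : ∀ y ∈ ball y₀ r, ContinuousAt fix y := by
    intro yc hyc
    rw [ContinuousAt, tendsto_iff_norm_sub_tendsto_zero]
    have hc : Tendsto (fun y => ‖f (fix yc, y) - f (fix yc, yc)‖) (𝓝 yc) (𝓝 0) := by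
      have h1 : ContinuousAt (fun y => f (fix yc, y)) yc :=
        (hf (fix yc, yc) ⟨hfixmem yc hyc, hyc⟩).continuousAt.comp
          ((continuous_const.prodMk continuous_id).continuousAt)
      have := h1.tendsto
      rw [tendsto_iff_norm_sub_tendsto_zero] at this
      exact this
    have hg : Tendsto (fun y => (1 - k)⁻¹ * ‖f (fix yc, y) - f (fix yc, yc)‖) (𝓝 yc) (𝓝 0) := by
      simpa using hc.const_mul (1 - k)⁻¹
    apply squeeze_zero' (Eventually.of_forall fun y => norm_nonneg _)
      ?_ hg
    filter_upwards [isOpen_ball.mem_nhds hyc] with y hy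
    have h1 : ‖fix y - fix yc‖ ≤ k * ‖fix y - fix yc‖ + ‖f (fix yc, y) - f (fix yc, yc)‖ := by
      calc ‖fix y - fix yc‖ = ‖f (fix y, y) - f (fix yc, yc)‖ := by
            rw [hfixeq y hy, hfixeq yc hyc]
        _ ≤ ‖f (fix y, y) - f (fix yc, y)‖ + ‖f (fix yc, y) - f (fix yc, yc)‖ :=
            norm_sub_le_norm_sub_add_norm_sub _ _ _
        _ ≤ k * ‖fix y - fix yc‖ + ‖f (fix yc, y) - f (fix yc, yc)‖ := by
            gcongr
            exact hcontr (fix y) (hfixmem y hy) (fix yc) (hfixmem yc hyc) y hy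
    have h2 : (1 - k) * ‖fix y - fix yc‖ ≤ ‖f (fix yc, y) - f (fix yc, yc)‖ := by nlinarith
    have h3 : (0:ℝ) < 1 - k := by linarith
    rw [le_inv_mul_iff₀ h3]
    linarith
  -- analyticity
  intro yc hyc
  set a : X := fix yc with hadef
  have ha : a ∈ closedBall x₀ δ := hfixmem yc hyc
  have hfa : AnalyticAt ℂ f (a, yc) := hf (a, yc) ⟨ha, hyc⟩
  set Φ : X × Y → X × Y := fun p => (p.1 - f p, p.2) with hΦdef
  have hΦa : AnalyticAt ℂ Φ (a, yc) := (analyticAt_fst.sub hfa).prod analyticAt_snd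
  set Df : X × Y →L[ℂ] X := fderiv ℂ f (a, yc) with hDfdef
  have hDf : HasStrictFDerivAt f Df (a, yc) := hfa.hasStrictFDerivAt
  set T : X →L[ℂ] X := Df.comp (inl ℂ X Y) with hTdef
  set B : Y →L[ℂ] X := Df.comp (inr ℂ X Y) with hBdef
  -- the partial derivative in `x` has norm at most `k`
  have hTnorm : ‖T‖ ≤ k := by
    set g : X → X := fun x => f (x, yc) with hgdef
    have hge : ∀ᶠ x in 𝓝 a, AnalyticAt ℂ f (x, yc) := by
      have hφ : ContinuousAt (fun x : X => (x, yc)) a :=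
        (continuous_id.prodMk continuous_const).continuousAt
      exact hφ.tendsto.eventually hfa.eventually_analyticAt
    obtain ⟨U, hUsub, hUopen, haU⟩ := _root_.mem_nhds_iff.mp hge
    have hgU : AnalyticOnNhd ℂ g U := by
      intro x hx
      have h1 : AnalyticAt ℂ (fun x' : X => (x', yc)) x := analyticAt_id.prod analyticAt_const
      exact AnalyticAt.comp (f := fun x' : X => (x', yc)) (hUsub hx) h1
    have hDgU : AnalyticOnNhd ℂ (fderiv ℂ g) U := hgU.fderiv_of_isOpen hUopen
    have hDgcont : ContinuousAt (fderiv ℂ g) a := (hDgU a haU).continuousAt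
    have hbound : ∀ x ∈ U ∩ ball x₀ δ, ‖fderiv ℂ g x‖ ≤ k := by
      intro x hx
      have hd : HasFDerivAt g (fderiv ℂ g x) x := (hgU x hx.1).differentiableAt.hasFDerivAt
      have hlip : LipschitzOnWith K g (closedBall x₀ δ) := by
        apply LipschitzOnWith.of_dist_le_mul
        intro x₁ h1 x₂ h2
        simp only [dist_eq_norm]; exact hcontr x₁ h1 x₂ h2 yc hyc
      exact hd.le_of_lipschitzOn (mem_of_superset (isOpen_ball.mem_nhds hx.2)
        ball_subset_closedBall) hlip
    -- approach `a` from the interior along the segment towards `x₀`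
    have hTa : fderiv ℂ g a = T := by
      have h1 : HasFDerivAt (fun x : X => (x, yc)) (inl ℂ X Y) a := hasFDerivAt_prodMk_left a yc
      exact (hDf.hasFDerivAt.comp a h1).fderiv
    rw [← hTa]
    set c : ℝ → X := fun s => a + s • (x₀ - a) with hcdef
    have hc0 : c 0 = a := by simp [hcdef]
    have hctend : Tendsto (fun s => ‖fderiv ℂ g (c s)‖) (𝓝[>] (0:ℝ)) (𝓝 ‖fderiv ℂ g a‖) := by
      apply tendsto_nhdsWithin_of_tendsto_nhds
      have h4 : ContinuousAt (fun s : ℝ => ‖fderiv ℂ g (c s)‖) 0 := by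
        apply ContinuousAt.norm
        exact ContinuousAt.comp (by rw [hc0]; exact hDgcont) (by fun_prop)
      simpa [hc0] using h4.tendsto
    apply le_of_tendsto hctend
    have hU' : ∀ᶠ s in 𝓝[>] (0:ℝ), c s ∈ U := by
      have hccont : ContinuousAt c 0 := by fun_prop
      have h5 := hccont.tendsto
      rw [hc0] at h5
      exact (h5.eventually (hUopen.eventually_mem haU)).filter_mono nhdsWithin_le_nhds
    have hI : Ioo (0:ℝ) 1 ∈ 𝓝[>] (0:ℝ) := Ioo_mem_nhdsGT one_pos
    filter_upwards [hU', hI] with s hsU hsI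
    apply hbound _ ⟨hsU, ?_⟩
    have hball : ‖c s - x₀‖ < δ := by
      have h1 : c s - x₀ = (1 - s) • (a - x₀) := by
        simp only [hcdef]
        module
      rw [h1, norm_smul]
      have h2 : ‖a - x₀‖ ≤ δ := by
        have := ha; rw [mem_closedBall, dist_eq_norm] at this; exact this
      have h3 : ‖(1 - s : ℝ)‖ = 1 - s := by
        rw [Real.norm_eq_abs, abs_of_pos]; linarith [hsI.2]
      rw [h3]
      nlinarith [hsI.1, hsI.2]
    rwa [mem_ball, dist_eq_norm]
  -- construct the invertible derivative of `Φ`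
  have hT1 : ‖T‖ < 1 := lt_of_le_of_lt hTnorm hk
  set u1 : (X →L[ℂ] X)ˣ := Units.oneSub T hT1 with hu1def
  set A : X ≃L[ℂ] X := ContinuousLinearEquiv.unitsEquiv ℂ X u1 with hAdef
  set shear : (X × Y) ≃L[ℂ] (X × Y) := ContinuousLinearEquiv.equivOfInverse
    ((fst ℂ X Y - B.comp (snd ℂ X Y)).prod (snd ℂ X Y))
    ((fst ℂ X Y + B.comp (snd ℂ X Y)).prod (snd ℂ X Y))
    (fun p => by simp) (fun p => by simp) with hsheardef
  set e : (X × Y) ≃L[ℂ] (X × Y) :=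
    (A.prodCongr (ContinuousLinearEquiv.refl ℂ Y)).trans shear with hedef
  have hΦ' : HasStrictFDerivAt Φ (e : (X × Y) →L[ℂ] (X × Y)) (a, yc) := by
    have h1 : HasStrictFDerivAt Φ (((fst ℂ X Y) - Df).prod (snd ℂ X Y)) (a, yc) :=
      (hasStrictFDerivAt_fst.sub hDf).prodMk hasStrictFDerivAt_snd
    have h2 : ((e : (X × Y) →L[ℂ] (X × Y))) = ((fst ℂ X Y) - Df).prod (snd ℂ X Y) := by
      apply ContinuousLinearMap.ext
      rintro ⟨u, v⟩
      have hsplit : Df (u, v) = T u + B v := by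
        rw [hTdef, hBdef]
        simp only [ContinuousLinearMap.comp_apply, inl_apply, inr_apply]
        rw [← map_add]
        norm_num
      have hA : A u = u - T u := by
        simp [hAdef, hu1def, Units.val_oneSub, sub_apply]
      simp only [hedef, ContinuousLinearEquiv.coe_coe, ContinuousLinearEquiv.trans_apply,
        ContinuousLinearEquiv.prodCongr_apply, ContinuousLinearEquiv.refl_apply, hsheardef,
        ContinuousLinearEquiv.equivOfInverse_apply, ContinuousLinearMap.prod_apply,
        ContinuousLinearMap.sub_apply, ContinuousLinearMap.coe_fst', coe_snd',
        ContinuousLinearMap.comp_apply, hA, hsplit]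
      rw [Prod.mk.injEq]
      exact ⟨by abel, rfl⟩
    rw [h2]
    exact h1
  set Φloc : OpenPartialHomeomorph (X × Y) (X × Y) := hΦ'.toOpenPartialHomeomorph Φ with hΦlocdef
  have hsrc : (a, yc) ∈ Φloc.source := hΦ'.mem_toOpenPartialHomeomorph_source
  have hcoe : ⇑Φloc = Φ := hΦ'.toOpenPartialHomeomorph_coe
  have hΦval : Φ (a, yc) = ((0 : X), yc) := by
    simp only [hΦdef]
    rw [show f (a, yc) = a from hfixeq yc hyc]
    simp
  have hsymm : AnalyticAt ℂ Φloc.symm ((0 : X), yc) := by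
    have h := Φloc.analyticAt_symm' (i := e) hsrc (by rw [hcoe]; exact hΦa)
      (by rw [hcoe]; exact hΦ'.hasFDerivAt.fderiv)
    rw [show Φloc (a, yc) = ((0 : X), yc) from by rw [hcoe] at *; exact hΦval] at h
    exact h
  -- locally, `fix y` is the first component of `Φloc.symm (0, y)`
  have hloc : ∀ᶠ y in 𝓝 yc, fix y = (Φloc.symm ((0 : X), y)).1 := by
    have hcy : ContinuousAt (fun y => (fix y, y)) yc :=
      (hcontfix yc hyc).prodMk continuousAt_id
    have hev1 : ∀ᶠ y in 𝓝 yc, (fix y, y) ∈ Φloc.source := by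
      apply hcy.tendsto.eventually
      exact Φloc.open_source.eventually_mem hsrc
    filter_upwards [hev1, isOpen_ball.mem_nhds hyc] with y hy1 hy2
    have hΦy : Φ (fix y, y) = ((0 : X), y) := by
      have h0 : f (fix y, y) = fix y := hfixeq y hy2
      simp only [hΦdef, h0, sub_self]
    have h6 : Φloc.symm ((0 : X), y) = (fix y, y) := by
      rw [← hΦy, ← hcoe]
      exact Φloc.left_inv hy1
    rw [h6]
  -- conclude
  have hinner : AnalyticAt ℂ (fun y : Y => ((0 : X), y)) yc :=
    analyticAt_const.prod analyticAt_id
  have hcomp : AnalyticAt ℂ (fun y => (Φloc.symm ((0 : X), y)).1) yc :=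
    analyticAt_fst.comp (hsymm.comp hinner)
  exact hcomp.congr (hloc.mono fun y hy => hy.symm)
end

section
/- Let E, F be complex Banach spaces and suppose x(t, y) : D_T × B_r → E solves dx/dt = f(x, y) with analytic f, and that the extended system dx/dt = f(x,y), du/dt = ∂_x f(x,y)·u + ∂_y f(x,y), with initial conditions x(0) = x₀, u(0) = 0, has a unique bounded solution (x(t,y), u(t,y)) analytic in t for each y. Then y ↦ x(t, y) is Fréchet differentiable with derivative u(t, y), i.e., the variational equation computes the derivative of the flow with respect to the parameter. -/
open Metric

open Metric Set in

private lemma exists_tube_bounds' {G H : Type*} [NormedAddCommGroup G] [NormedSpace ℝ G]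
    [NormedAddCommGroup H] [NormedSpace ℝ H] {g : G → H}
    (hg : ∀ p, ContDiffAt ℝ 1 g p) {K : Set G} (hK : IsCompact K) :
    ∃ ε > 0, ∃ M L : ℝ, 0 ≤ M ∧ 0 ≤ L ∧
      ∀ p ∈ K, ∀ z1 ∈ ball p ε, ‖g z1‖ ≤ M ∧
        ∀ z2 ∈ ball p ε, ‖g z1 - g z2‖ ≤ L * ‖z1 - z2‖ := by
  rcases K.eq_empty_or_nonempty with hKe | hKne
  · exact ⟨1, one_pos, 0, 0, le_refl _, le_refl _, by simp [hKe]⟩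
  have key : ∀ p : G, ∃ δ > 0, ∃ M₀ L₀ : ℝ, 0 ≤ M₀ ∧ 0 ≤ L₀ ∧
      ∀ z1 ∈ ball p δ, ‖g z1‖ ≤ M₀ ∧
        ∀ z2 ∈ ball p δ, ‖g z1 - g z2‖ ≤ L₀ * ‖z1 - z2‖ := by
    intro p
    obtain ⟨Lp, t, ht, hlip⟩ := (hg p).exists_lipschitzOnWith
    obtain ⟨δ₁, hδ₁, hb⟩ := Metric.continuousAt_iff.mp (hg p).continuousAt 1 one_pos
    obtain ⟨δ₂, hδ₂, ht2⟩ := Metric.mem_nhds_iff.mp ht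
    refine ⟨min δ₁ δ₂, lt_min hδ₁ hδ₂, ‖g p‖ + 1, Lp, by positivity, Lp.coe_nonneg, ?_⟩
    intro z1 hz1
    have hz1' : z1 ∈ ball p δ₁ := ball_subset_ball (min_le_left _ _) hz1
    have hz1t : z1 ∈ t := ht2 (ball_subset_ball (min_le_right _ _) hz1)
    constructor
    · have h2 : ‖g z1 - g p‖ < 1 := by rw [← dist_eq_norm]; exact hb hz1'
      have h3 := norm_sub_norm_le (g z1) (g p)
      linarith
    · intro z2 hz2
      have hz2t : z2 ∈ t := ht2 (ball_subset_ball (min_le_right _ _) hz2)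
      have := hlip.dist_le_mul z1 hz1t z2 hz2t
      rwa [dist_eq_norm, dist_eq_norm] at this
  choose δ hδ M₀ L₀ hM₀ hL₀ hball using key
  -- finite subcover of K by balls of radius δ p / 2
  have hcover : K ⊆ ⋃ p ∈ K, ball p (δ p / 2) := fun q hq =>
    mem_biUnion hq (mem_ball_self (by linarith [hδ q]))
  obtain ⟨s, hsK, hsfin, hs⟩ := hK.elim_finite_subcover_image
    (fun p _ => isOpen_ball) hcover
  set t : Finset G := hsfin.toFinset with htdef
  have hts : ∀ p, p ∈ t ↔ p ∈ s := fun p => hsfin.mem_toFinset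
  have htne : t.Nonempty := by
    obtain ⟨q, hq⟩ := hKne
    obtain ⟨p, hp, _⟩ := mem_iUnion₂.mp (hs hq)
    exact ⟨p, (hts p).2 hp⟩
  refine ⟨t.inf' htne (fun p => δ p / 2), ?_, t.sup' htne M₀, t.sup' htne L₀, ?_, ?_, ?_⟩
  · exact (Finset.lt_inf'_iff _).2 fun p _ => by linarith [hδ p]
  · obtain ⟨p, hp⟩ := htne
    exact le_trans (hM₀ p) (Finset.le_sup' _ hp)
  · obtain ⟨p, hp⟩ := htne
    exact le_trans (hL₀ p) (Finset.le_sup' _ hp)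
  · intro q hq z1 hz1
    obtain ⟨p, hp, hqp⟩ := mem_iUnion₂.mp (hs hq)
    have hpt : p ∈ t := (hts p).2 hp
    have hsub : ball q (t.inf' htne (fun p => δ p / 2)) ⊆ ball p (δ p) := by
      intro z hz
      have h1 : dist z q < δ p / 2 :=
        lt_of_lt_of_le hz (Finset.inf'_le _ hpt)
      have h2 : dist q p < δ p / 2 := hqp
      have := dist_triangle z q p
      simp only [mem_ball] at *
      linarith
    have hz1' : z1 ∈ ball p (δ p) := hsub hz1
    obtain ⟨hb1, hb2⟩ := hball p z1 hz1'
    refine ⟨le_trans hb1 (Finset.le_sup' _ hpt), fun z2 hz2 => ?_⟩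
    refine le_trans (hb2 z2 (hsub hz2)) ?_
    exact mul_le_mul_of_nonneg_right (Finset.le_sup' _ hpt) (norm_nonneg _)

open Metric in

private lemma hasDerivAt_path {E : Type*} [NormedAddCommGroup E] [NormedSpace ℂ E]
    {X : ℂ → E} {v : E} {t₀ : ℂ} {s : ℝ}
    (h : HasDerivAt X v ((s : ℂ) * t₀)) :
    HasDerivAt (fun s : ℝ => X ((s : ℂ) * t₀)) (t₀ • v) s := by
  have hψ : HasDerivAt (fun s : ℝ => (s : ℂ) * t₀) t₀ s := by
    simpa using ((hasDerivAt_id (((s:ℝ)):ℂ)).mul_const t₀).comp_ofReal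
  have h2 := (h.hasFDerivAt.restrictScalars ℝ).comp_hasDerivAt s hψ
  simpa [Function.comp_def] using h2

open Metric in
private lemma taylor_quadratic {G H : Type*} [NormedAddCommGroup G] [NormedSpace ℂ G]
    [NormedAddCommGroup H] [NormedSpace ℂ H] {f : G → H}
    (hfd : ∀ p, DifferentiableAt ℂ f p) {p : G} {ε L : ℝ} (hL0 : 0 ≤ L)
    (hL : ∀ z1 ∈ ball p ε, ∀ z2 ∈ ball p ε, ‖fderiv ℂ f z1 - fderiv ℂ f z2‖ ≤ L * ‖z1 - z2‖)
    {q q' : G} (hq : q ∈ ball p ε) (hq' : q' ∈ ball p ε) :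
    ‖f q' - f q - fderiv ℂ f q (q' - q)‖ ≤ L * (‖q' - q‖ * ‖q' - q‖) := by
  have hseg : segment ℝ q q' ⊆ ball p ε := (convex_ball p ε).segment_subset hq hq'
  have hdist : ∀ z ∈ segment ℝ q q', ‖z - q‖ ≤ ‖q' - q‖ := by
    rintro z ⟨a, b, ha, hb, hab, rfl⟩
    have : a • q + b • q' - q = b • (q' - q) := by
      have ha' : a = 1 - b := by linarith
      rw [ha']; module
    rw [this, norm_smul, Real.norm_eq_abs, abs_of_nonneg hb]
    nlinarith [norm_nonneg (q' - q)]
  have hbound : ∀ z ∈ segment ℝ q q',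
      ‖(fderiv ℂ f z).restrictScalars ℝ - (fderiv ℂ f q).restrictScalars ℝ‖ ≤ L * ‖q' - q‖ := by
    intro z hz
    have heq : (fderiv ℂ f z).restrictScalars ℝ - (fderiv ℂ f q).restrictScalars ℝ
        = (fderiv ℂ f z - fderiv ℂ f q).restrictScalars ℝ := rfl
    rw [heq, ContinuousLinearMap.norm_restrictScalars]
    have h1 := hL z (hseg hz) q hq
    have h2 := hdist z hz
    nlinarith [norm_nonneg (fderiv ℂ f z - fderiv ℂ f q)]
  have hmvt := (convex_segment q q').norm_image_sub_le_of_norm_hasFDerivWithin_le'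
    (f := f) (f' := fun z => (fderiv ℂ f z).restrictScalars ℝ)
    (φ := (fderiv ℂ f q).restrictScalars ℝ) (C := L * ‖q' - q‖)
    (fun z _ => ((hfd z).hasFDerivAt.restrictScalars ℝ).hasFDerivWithinAt)
    hbound (left_mem_segment ℝ q q') (right_mem_segment ℝ q q')
  simpa [mul_assoc] using hmvt

private lemma gronwallBound_le_aux {Kc m σ : ℝ} (hK : 1 ≤ Kc) (hm : 0 ≤ m)
    (hσ1 : σ ≤ 1) : gronwallBound 0 Kc m σ ≤ m / Kc * Real.exp Kc := by
  have hK0 : Kc ≠ 0 := by linarith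
  simp only [gronwallBound_of_K_ne_0 hK0, zero_mul, zero_add]
  have h1 : Real.exp (Kc * σ) - 1 ≤ Real.exp Kc := by
    have : Real.exp (Kc * σ) ≤ Real.exp Kc := Real.exp_le_exp.2 (by nlinarith)
    linarith
  have h3 : 0 ≤ m / Kc := div_nonneg hm (by linarith)
  calc m / Kc * (Real.exp (Kc * σ) - 1) ≤ m / Kc * Real.exp Kc :=
    mul_le_mul_of_nonneg_left h1 h3


variable {E F : Type*} [NormedAddCommGroup E] [NormedSpace ℂ E] [CompleteSpace E]
  [NormedAddCommGroup F] [NormedSpace ℂ F] [CompleteSpace F]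

/-- Right-hand side of the variational (linearized) equation:
`∂ₓ f(x, y) ∘ u + ∂_y f(x, y)`. -/
noncomputable def varRHS (f : E × F → E) (xv : E) (y : F) (uv : F →L[ℂ] E) :
    F →L[ℂ] E :=
  ((fderiv ℂ f (xv, y)).comp (ContinuousLinearMap.inl ℂ E F)).comp uv +
    (fderiv ℂ f (xv, y)).comp (ContinuousLinearMap.inr ℂ E F)

set_option maxHeartbeats 2000000 in
/-- suppose `x (t, y)` solves `dx/dt = f(x, y)`, `x(0) = x₀` on the disk
`D_T`, and the extended system consisting of this ODE together with the variational
equation `du/dt = ∂ₓ f(x,y)·u + ∂_y f(x,y)`, `u(0) = 0`, has a unique bounded solution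
`(x(t,y), u(t,y))`, analytic in `t` for each `y ∈ B_r`.  Then `y ↦ x (t, y)` is
Fréchet differentiable with derivative `u (t, y)`. -/
theorem variational_equation_gives_parameter_derivative
    (f : E × F → E) (hf : AnalyticOnNhd ℂ f Set.univ)
    (x₀ : E) (y₀ : F) (T r C : ℝ) (hT : 0 < T) (hr : 0 < r)
    (x : ℂ × F → E) (u : ℂ × F → F →L[ℂ] E)
    (hx0 : ∀ y ∈ ball y₀ r, x (0, y) = x₀)
    (hu0 : ∀ y ∈ ball y₀ r, u (0, y) = 0)
    (hxode : ∀ y ∈ ball y₀ r, ∀ t ∈ ball (0:ℂ) T,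
      HasDerivAt (fun s => x (s, y)) (f (x (t, y), y)) t)
    (huode : ∀ y ∈ ball y₀ r, ∀ t ∈ ball (0:ℂ) T,
      HasDerivAt (fun s => u (s, y)) (varRHS f (x (t, y)) y (u (t, y))) t)
    (hbdd : ∀ y ∈ ball y₀ r, ∀ t ∈ ball (0:ℂ) T, ‖x (t, y)‖ ≤ C ∧ ‖u (t, y)‖ ≤ C)
    (hanal : ∀ y ∈ ball y₀ r,
      AnalyticOnNhd ℂ (fun t => x (t, y)) (ball (0:ℂ) T) ∧
      AnalyticOnNhd ℂ (fun t => u (t, y)) (ball (0:ℂ) T))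
    (huniq : ∀ y ∈ ball y₀ r, ∀ (x' : ℂ → E) (u' : ℂ → F →L[ℂ] E),
      x' 0 = x₀ → u' 0 = 0 →
      (∀ t ∈ ball (0:ℂ) T, HasDerivAt x' (f (x' t, y)) t) →
      (∀ t ∈ ball (0:ℂ) T, HasDerivAt u' (varRHS f (x' t) y (u' t)) t) →
      (∀ t ∈ ball (0:ℂ) T, ‖x' t‖ ≤ C ∧ ‖u' t‖ ≤ C) →
      ∀ t ∈ ball (0:ℂ) T, x' t = x (t, y) ∧ u' t = u (t, y)) :
    ∀ t ∈ ball (0:ℂ) T, ∀ y ∈ ball y₀ r,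
      HasFDerivAt (fun y' => x (t, y')) (u (t, y)) y := by
  intro t₀ ht₀ y hy
  classical
  have hfdiff : ∀ p : E × F, DifferentiableAt ℂ f p :=
    fun p => (hf p (Set.mem_univ p)).differentiableAt
  have hfC1 : ∀ p : E × F, ContDiffAt ℝ 1 f p :=
    fun p => ((hf p (Set.mem_univ p)).restrictScalars.contDiffAt).of_le le_top
  have hgC1 : ∀ p : E × F, ContDiffAt ℝ 1 (fderiv ℂ f) p :=
    fun p => ((hf.fderiv p (Set.mem_univ p)).restrictScalars.contDiffAt).of_le le_top
  set ψ : ℝ → ℂ := fun s => (s : ℂ) * t₀ with hψdef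
  have ht₀T : ‖t₀‖ < T := by rwa [mem_ball, dist_zero_right] at ht₀
  have hmemT : ∀ s ∈ Set.Icc (0:ℝ) 1, ψ s ∈ ball (0:ℂ) T := by
    intro s hs
    rw [mem_ball, dist_zero_right, hψdef]
    have : ‖(s:ℂ) * t₀‖ = |s| * ‖t₀‖ := by
      rw [norm_mul, Complex.norm_real, Real.norm_eq_abs]
    rw [this, abs_of_nonneg hs.1]
    nlinarith [hs.2, norm_nonneg t₀]
  have hψ0 : ψ 0 = 0 := by simp [hψdef]
  have hψ1 : ψ 1 = t₀ := by simp [hψdef]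
  -- derivatives along the real path
  have hXd : ∀ w ∈ ball y₀ r, ∀ s ∈ Set.Icc (0:ℝ) 1,
      HasDerivAt (fun s : ℝ => x (ψ s, w)) (t₀ • f (x (ψ s, w), w)) s :=
    fun w hw s hs => hasDerivAt_path (hxode w hw (ψ s) (hmemT s hs))
  have hUd : ∀ s ∈ Set.Icc (0:ℝ) 1,
      HasDerivAt (fun s : ℝ => u (ψ s, y)) (t₀ • varRHS f (x (ψ s, y)) y (u (ψ s, y))) s :=
    fun s hs => hasDerivAt_path (huode y hy (ψ s) (hmemT s hs))
  -- the compact trajectory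
  set K : Set (E × F) := (fun s : ℝ => (x (ψ s, y), y)) '' Set.Icc 0 1 with hKdef
  have hKcomp : IsCompact K := by
    apply isCompact_Icc.image_of_continuousOn
    intro s hs
    exact (((hXd y hy s hs).continuousAt).prodMk continuousAt_const).continuousWithinAt
  obtain ⟨ε₁, hε₁, M₁, L₁, hM₁, hL₁, H₁⟩ := exists_tube_bounds' hfC1 hKcomp
  obtain ⟨ε₂, hε₂, M₂, L₂, hM₂, hL₂, H₂⟩ := exists_tube_bounds' hgC1 hKcomp
  set ε : ℝ := min ε₁ ε₂ with hεdef
  have hε : 0 < ε := lt_min hε₁ hε₂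
  set κ : ℝ := ‖t₀‖ * L₁ + 1 with hκdef
  have hκ1 : 1 ≤ κ := by nlinarith [norm_nonneg t₀]
  set cB : ℝ := Real.exp κ with hcBdef
  have hcB1 : 1 ≤ cB := by
    rw [hcBdef]; calc (1:ℝ) = Real.exp 0 := by simp
    _ ≤ Real.exp κ := Real.exp_le_exp.2 (by linarith)
  have hd : dist y y₀ < r := mem_ball.1 hy
  set ρ : ℝ := min (min (ε/4) (r - dist y y₀)) (ε/(4*cB)) with hρdef
  have hρ : 0 < ρ := by
    apply lt_min (lt_min (by linarith) (by linarith))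
    positivity
  have hρε : ρ ≤ ε/4 := le_trans (min_le_left _ _) (min_le_left _ _)
  have hρr : ρ ≤ r - dist y y₀ := le_trans (min_le_left _ _) (min_le_right _ _)
  have hρcB : ρ ≤ ε/(4*cB) := min_le_right _ _
  set κ₂ : ℝ := ‖t₀‖ * M₂ + 1 with hκ₂def
  have hκ₂1 : 1 ≤ κ₂ := by nlinarith [norm_nonneg t₀]
  set cc : ℝ := (‖t₀‖ * L₂ * (cB+1)^2) * Real.exp κ₂ with hccdef
  have hcc : 0 ≤ cc := by positivity
  -- main quantitative estimate
  have main : ∀ y', dist y' y < ρ →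
      ‖x (t₀, y') - x (t₀, y) - (u (t₀, y)) (y' - y)‖ ≤ cc * (‖y' - y‖ * ‖y' - y‖) := by
    intro y' hy'ρ
    have hy' : y' ∈ ball y₀ r := by
      rw [mem_ball]
      calc dist y' y₀ ≤ dist y' y + dist y y₀ := dist_triangle _ _ _
        _ < ρ + dist y y₀ := by linarith
        _ ≤ r := by linarith
    set n : ℝ := ‖y' - y‖ with hndef
    have hn0 : 0 ≤ n := norm_nonneg _
    have hnρ : n < ρ := by rw [hndef, ← dist_eq_norm]; exact hy'ρ
    set Δ : ℝ → E := fun s => x (ψ s, y') - x (ψ s, y) with hΔdef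
    have hΔd : ∀ s ∈ Set.Icc (0:ℝ) 1,
        HasDerivAt Δ (t₀ • (f (x (ψ s, y'), y') - f (x (ψ s, y), y))) s := by
      intro s hs
      rw [smul_sub]; exact (hXd y' hy' s hs).sub (hXd y hy s hs)
    have hΔ0 : Δ 0 = 0 := by
      rw [hΔdef]; simp only [hψ0]
      rw [hx0 y' hy', hx0 y hy, sub_self]
    -- membership facts
    have hKmem : ∀ s ∈ Set.Icc (0:ℝ) 1, (x (ψ s, y), y) ∈ K :=
      fun s hs => Set.mem_image_of_mem _ hs
    have htube : ∀ s ∈ Set.Icc (0:ℝ) 1, ‖Δ s‖ ≤ ε/4 →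
        (x (ψ s, y'), y') ∈ ball ((x (ψ s, y), y)) ε := by
      intro s hs hΔs
      rw [mem_ball, Prod.dist_eq, max_lt_iff]
      constructor
      · rw [dist_eq_norm]; exact lt_of_le_of_lt hΔs (by linarith)
      · rw [dist_eq_norm, ← hndef]; linarith
    -- Gronwall for Δ under the tube assumption
    have gron : ∀ b ∈ Set.Icc (0:ℝ) 1, (∀ σ ∈ Set.Icc 0 b, ‖Δ σ‖ ≤ ε/4) →
        ∀ σ ∈ Set.Icc 0 b, ‖Δ σ‖ ≤ cB * n := by
      intro b hb htub
      have hIcc : Set.Icc (0:ℝ) b ⊆ Set.Icc 0 1 :=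
        Set.Icc_subset_Icc (le_refl _) hb.2
      have hbd := norm_le_gronwallBound_of_norm_deriv_right_le
        (f := Δ) (f' := fun σ => t₀ • (f (x (ψ σ, y'), y') - f (x (ψ σ, y), y)))
        (δ := 0) (K := κ) (ε := κ * n) (a := 0) (b := b)
        (fun σ hσ => (hΔd σ (hIcc hσ)).continuousAt.continuousWithinAt)
        (fun σ hσ => (hΔd σ (hIcc (Set.mem_Icc_of_Ico hσ))).hasDerivWithinAt)
        (by rw [hΔ0, norm_zero])
        ?_
      · intro σ hσ
        have h1 := hbd σ hσ
        have h2 : gronwallBound 0 κ (κ * n) (σ - 0) ≤ (κ * n) / κ * Real.exp κ := by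
          apply gronwallBound_le_aux hκ1 (by positivity)
          have := (hIcc hσ).2; linarith
        have h3 : (κ * n) / κ = n := by
          field_simp
        rw [h3] at h2
        exact le_trans h1 (le_trans h2 (le_of_eq (mul_comm _ _)))
      · intro σ hσ
        have hσ1 : σ ∈ Set.Icc (0:ℝ) 1 := hIcc (Set.mem_Icc_of_Ico hσ)
        have hΔσ : ‖Δ σ‖ ≤ ε/4 := htub σ (Set.mem_Icc_of_Ico hσ)
        have hq' := htube σ hσ1 hΔσ
        have hq'1 : (x (ψ σ, y'), y') ∈ ball ((x (ψ σ, y), y)) ε₁ :=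
          ball_subset_ball (min_le_left _ _) hq'
        have hqc : ((x (ψ σ, y), y) : E × F) ∈ ball ((x (ψ σ, y), y)) ε₁ :=
          mem_ball_self hε₁
        have hlip := (H₁ _ (hKmem σ hσ1) _ hq'1).2 _ hqc
        have hqq : ‖((x (ψ σ, y'), y') : E × F) - (x (ψ σ, y), y)‖ ≤ ‖Δ σ‖ + n := by
          rw [Prod.norm_def]
          apply max_le
          · simp only [Prod.fst_sub]; rw [hΔdef]; simp; linarith
          · simp only [Prod.snd_sub]; rw [← hndef]; linarith [norm_nonneg (Δ σ)]
        rw [norm_smul]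
        calc ‖t₀‖ * ‖f (x (ψ σ, y'), y') - f (x (ψ σ, y), y)‖
            ≤ ‖t₀‖ * (L₁ * (‖Δ σ‖ + n)) := by
              apply mul_le_mul_of_nonneg_left _ (norm_nonneg t₀)
              exact le_trans hlip (mul_le_mul_of_nonneg_left hqq hL₁)
          _ ≤ κ * ‖Δ σ‖ + κ * n := by
              rw [hκdef]
              nlinarith [norm_nonneg t₀, norm_nonneg (Δ σ)]
    -- bootstrap: the tube assumption holds on all of [0,1]
    have hboot : Set.Icc (0:ℝ) 1 ⊆ {b : ℝ | ∀ σ ∈ Set.Icc 0 b, ‖Δ σ‖ ≤ ε/4} := by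
      have hΔcont : ∀ σ ∈ Set.Icc (0:ℝ) 1, ContinuousAt Δ σ :=
        fun σ hσ => (hΔd σ hσ).continuousAt
      have hcB0 : 0 < cB := by linarith
      have hcBn : cB * n < ε/4 := by
        have h1 : cB * n < cB * ρ := mul_lt_mul_of_pos_left hnρ hcB0
        have h2 : cB * ρ ≤ cB * (ε/(4*cB)) := mul_le_mul_of_nonneg_left hρcB hcB0.le
        have h3 : cB * (ε/(4*cB)) = ε/4 := by field_simp
        linarith
      have hclosed : IsClosed ({b : ℝ | ∀ σ ∈ Set.Icc 0 b, ‖Δ σ‖ ≤ ε/4} ∩ Set.Icc 0 1) := by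
        apply IsSeqClosed.isClosed
        intro bs b hbs hlim
        have hbIcc : b ∈ Set.Icc (0:ℝ) 1 :=
          isClosed_Icc.isSeqClosed (fun k => (hbs k).2) hlim
        refine ⟨fun σ hσ => ?_, hbIcc⟩
        have hσIcc : σ ∈ Set.Icc (0:ℝ) 1 := ⟨hσ.1, le_trans hσ.2 hbIcc.2⟩
        have hlim2 : Filter.Tendsto (fun k => min σ (bs k)) Filter.atTop (nhds σ) := by
          have := Filter.Tendsto.min (tendsto_const_nhds (x := σ)) hlim
          rwa [min_eq_left hσ.2] at this
        have hle : ∀ k, ‖Δ (min σ (bs k))‖ ≤ ε/4 := fun k =>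
          (hbs k).1 _ ⟨le_min hσ.1 (hbs k).2.1, min_le_right _ _⟩
        have hcont2 : Filter.Tendsto (fun k => ‖Δ (min σ (bs k))‖)
            Filter.atTop (nhds ‖Δ σ‖) :=
          ((hΔcont σ hσIcc).tendsto.comp hlim2).norm
        exact le_of_tendsto hcont2 (Filter.Eventually.of_forall hle)
      apply IsClosed.Icc_subset_of_forall_exists_gt hclosed
      · intro σ hσ
        have hσ0 : σ = 0 := le_antisymm hσ.2 hσ.1
        rw [hσ0, hΔ0, norm_zero]; linarith
      · rintro b ⟨hbS, hbI⟩ c hc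
        have hb1 : b ∈ Set.Icc (0:ℝ) 1 := ⟨hbI.1, hbI.2.le⟩
        have hΔb : ‖Δ b‖ ≤ cB * n := gron b hb1 hbS b (Set.right_mem_Icc.2 hbI.1)
        have hΔblt : ‖Δ b‖ < ε/4 := lt_of_le_of_lt hΔb hcBn
        obtain ⟨η, hη, hcont⟩ := Metric.continuousAt_iff.mp (hΔcont b hb1)
          (ε/4 - ‖Δ b‖) (by linarith)
        refine ⟨min c (b + η/2), fun σ hσ => ?_, lt_min hc (by linarith), min_le_left _ _⟩
        rcases le_or_gt σ b with h | h
        · exact hbS σ ⟨hσ.1, h⟩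
        · have h6 : σ ≤ b + η/2 := le_trans hσ.2 (min_le_right _ _)
          have h5 : dist σ b < η := by
            rw [Real.dist_eq, abs_of_pos (by linarith)]
            linarith
          have h8 := hcont h5
          rw [dist_eq_norm] at h8
          have h7 := norm_sub_norm_le (Δ σ) (Δ b)
          linarith
    have htub1 : ∀ σ ∈ Set.Icc (0:ℝ) 1, ‖Δ σ‖ ≤ ε/4 :=
      fun σ hσ => hboot ⟨zero_le_one, le_refl 1⟩ σ hσ
    have hLip : ∀ σ ∈ Set.Icc (0:ℝ) 1, ‖Δ σ‖ ≤ cB * n :=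
      gron 1 ⟨zero_le_one, le_refl 1⟩ htub1
    -- quadratic Gronwall estimate
    set δf : ℝ → E := fun s => x (ψ s, y') - x (ψ s, y) - (u (ψ s, y)) (y' - y) with hδdef
    have hδd : ∀ s ∈ Set.Icc (0:ℝ) 1, HasDerivAt δf
        (t₀ • (f (x (ψ s, y'), y') - f (x (ψ s, y), y)
          - varRHS f (x (ψ s, y)) y (u (ψ s, y)) (y' - y))) s := by
      intro s hs
      have hU : HasDerivAt (fun s : ℝ => (u (ψ s, y)) (y' - y))
          (t₀ • (varRHS f (x (ψ s, y)) y (u (ψ s, y)) (y' - y))) s := by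
        have h1 := ((ContinuousLinearMap.apply ℂ E (y' - y)).hasFDerivAt.restrictScalars
          ℝ).comp_hasDerivAt s (hUd s hs)
        simpa [Function.comp_def, smul_sub] using h1
      have h2 := ((hXd y' hy' s hs).sub (hXd y hy s hs)).sub hU
      rw [smul_sub, smul_sub]; exact h2
    have hδ0 : δf 0 = 0 := by
      simp only [hδdef, hψ0]
      rw [hx0 y' hy', hx0 y hy, hu0 y hy]
      simp
    set m : ℝ := (‖t₀‖ * L₂ * (cB+1)^2) * (n * n) with hmdef
    have hm0 : 0 ≤ m := by positivity
    have hbd := norm_le_gronwallBound_of_norm_deriv_right_le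
      (f := δf) (f' := fun σ => t₀ • (f (x (ψ σ, y'), y') - f (x (ψ σ, y), y)
          - varRHS f (x (ψ σ, y)) y (u (ψ σ, y)) (y' - y)))
      (δ := 0) (K := κ₂) (ε := m) (a := 0) (b := 1)
      (fun σ hσ => (hδd σ hσ).continuousAt.continuousWithinAt)
      (fun σ hσ => (hδd σ (Set.mem_Icc_of_Ico hσ)).hasDerivWithinAt)
      (by rw [hδ0, norm_zero]) ?_
    · have h1 := hbd 1 ⟨zero_le_one, le_refl 1⟩
      have h2 : gronwallBound 0 κ₂ m (1 - 0) ≤ m / κ₂ * Real.exp κ₂ :=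
        gronwallBound_le_aux hκ₂1 hm0 (by norm_num)
      have h3 : m / κ₂ ≤ m := div_le_self hm0 hκ₂1
      have h4 : δf 1 = x (t₀, y') - x (t₀, y) - (u (t₀, y)) (y' - y) := by
        simp only [hδdef, hψ1]
      rw [h4] at h1
      calc ‖x (t₀, y') - x (t₀, y) - (u (t₀, y)) (y' - y)‖
          ≤ gronwallBound 0 κ₂ m (1-0) := h1
        _ ≤ m / κ₂ * Real.exp κ₂ := h2
        _ ≤ m * Real.exp κ₂ :=
            mul_le_mul_of_nonneg_right h3 (Real.exp_pos _).le
        _ = cc * (n * n) := by rw [hccdef, hmdef]; ring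
    · intro σ hσ
      have hσ1 : σ ∈ Set.Icc (0:ℝ) 1 := Set.mem_Icc_of_Ico hσ
      have hΔσ : ‖Δ σ‖ ≤ ε/4 := htub1 σ hσ1
      have hq'mem : ((x (ψ σ, y'), y') : E × F) ∈ ball ((x (ψ σ, y), y)) ε :=
        htube σ hσ1 hΔσ
      have hq'2 : ((x (ψ σ, y'), y') : E × F) ∈ ball ((x (ψ σ, y), y)) ε₂ :=
        ball_subset_ball (min_le_right _ _) hq'mem
      have hqc : ((x (ψ σ, y), y) : E × F) ∈ ball ((x (ψ σ, y), y)) ε₂ :=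
        mem_ball_self hε₂
      have hKq := hKmem σ hσ1
      have hT2 := taylor_quadratic hfdiff hL₂
        (fun z1 h1 z2 h2 => (H₂ _ hKq z1 h1).2 z2 h2) hqc hq'2
      have hgM : ‖fderiv ℂ f ((x (ψ σ, y), y))‖ ≤ M₂ := (H₂ _ hKq _ hqc).1
      -- algebra
      have h6 : (((x (ψ σ, y'), y') : E × F) - (x (ψ σ, y), y)) = (Δ σ, y' - y) := by
        rw [Prod.mk_sub_mk]
      have h7 : fderiv ℂ f ((x (ψ σ, y), y)) ((δf σ : E), (0:F))
          = fderiv ℂ f ((x (ψ σ, y), y)) (((x (ψ σ, y'), y') : E × F) - (x (ψ σ, y), y))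
            - fderiv ℂ f ((x (ψ σ, y), y)) ((u (ψ σ, y)) (y' - y), y' - y) := by
        rw [← map_sub]
        congr 1
        rw [h6, Prod.mk_sub_mk]
        refine Prod.ext ?_ ?_
        · simp [hδdef, hΔdef]
        · simp
      have h5 : varRHS f (x (ψ σ, y)) y (u (ψ σ, y)) (y' - y)
          = fderiv ℂ f ((x (ψ σ, y), y)) ((u (ψ σ, y)) (y' - y), y' - y) := by
        simp only [varRHS, ContinuousLinearMap.add_apply, ContinuousLinearMap.comp_apply,
          ContinuousLinearMap.inl_apply, ContinuousLinearMap.inr_apply, ← map_add,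
          Prod.mk_add_mk, add_zero, zero_add]
      have halg : f ((x (ψ σ, y'), y')) - f ((x (ψ σ, y), y))
            - varRHS f (x (ψ σ, y)) y (u (ψ σ, y)) (y' - y)
          = (f ((x (ψ σ, y'), y')) - f ((x (ψ σ, y), y))
              - fderiv ℂ f ((x (ψ σ, y), y))
                (((x (ψ σ, y'), y') : E × F) - (x (ψ σ, y), y)))
            + fderiv ℂ f ((x (ψ σ, y), y)) ((δf σ : E), (0:F)) := by
        rw [h5, h7]; abel
      -- norms
      have hqq : ‖(((x (ψ σ, y'), y') : E × F) - (x (ψ σ, y), y))‖ ≤ (cB+1) * n := by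
        rw [h6, Prod.norm_def]
        apply max_le
        · calc ‖Δ σ‖ ≤ cB * n := hLip σ hσ1
            _ ≤ (cB+1) * n := by nlinarith
        · calc ‖y' - y‖ = n := rfl
            _ ≤ (cB+1) * n := by nlinarith
      have hR : ‖f ((x (ψ σ, y'), y')) - f ((x (ψ σ, y), y))
          - fderiv ℂ f ((x (ψ σ, y), y))
            (((x (ψ σ, y'), y') : E × F) - (x (ψ σ, y), y))‖
          ≤ L₂ * (((cB+1) * n) * ((cB+1) * n)) := by
        refine le_trans hT2 ?_
        have hnn := norm_nonneg (((x (ψ σ, y'), y') : E × F) - (x (ψ σ, y), y))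
        exact mul_le_mul_of_nonneg_left (mul_le_mul hqq hqq hnn (by positivity)) hL₂
      have hD : ‖fderiv ℂ f ((x (ψ σ, y), y)) ((δf σ : E), (0:F))‖ ≤ M₂ * ‖δf σ‖ := by
        calc ‖fderiv ℂ f ((x (ψ σ, y), y)) ((δf σ : E), (0:F))‖
            ≤ ‖fderiv ℂ f ((x (ψ σ, y), y))‖ * ‖((δf σ : E), (0:F))‖ :=
              ContinuousLinearMap.le_opNorm _ _
          _ ≤ M₂ * ‖δf σ‖ := by
              have hn1 : ‖((δf σ : E), (0:F))‖ = ‖δf σ‖ := by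
                rw [Prod.norm_def]; simp [norm_nonneg]
              rw [hn1]
              exact mul_le_mul_of_nonneg_right hgM (norm_nonneg _)
      rw [norm_smul, halg]
      calc ‖t₀‖ * ‖(f ((x (ψ σ, y'), y')) - f ((x (ψ σ, y), y))
              - fderiv ℂ f ((x (ψ σ, y), y))
                (((x (ψ σ, y'), y') : E × F) - (x (ψ σ, y), y)))
            + fderiv ℂ f ((x (ψ σ, y), y)) ((δf σ : E), (0:F))‖
          ≤ ‖t₀‖ * (L₂ * (((cB+1) * n) * ((cB+1) * n)) + M₂ * ‖δf σ‖) := by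
            apply mul_le_mul_of_nonneg_left _ (norm_nonneg t₀)
            exact le_trans (norm_add_le _ _) (by linarith)
        _ ≤ κ₂ * ‖δf σ‖ + m := by
            rw [hκ₂def, hmdef]
            nlinarith [norm_nonneg t₀, norm_nonneg (δf σ)]
  -- conclude differentiability
  rw [hasFDerivAt_iff_isLittleO_nhds_zero, Asymptotics.isLittleO_iff]
  intro c hc
  rw [Metric.eventually_nhds_iff]
  refine ⟨min ρ (c/(cc+1)), lt_min hρ (by positivity), ?_⟩
  intro h hh
  rw [dist_zero_right] at hh
  have hd1 : dist (y + h) y < ρ := by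
    rw [dist_eq_norm, add_sub_cancel_left]
    exact lt_of_lt_of_le hh (min_le_left _ _)
  have h1 := main (y + h) hd1
  rw [add_sub_cancel_left] at h1
  have h2 : ‖h‖ < c/(cc+1) := lt_of_lt_of_le hh (min_le_right _ _)
  have h3 : 0 ≤ ‖h‖ := norm_nonneg _
  calc ‖x (t₀, y + h) - x (t₀, y) - (u (t₀, y)) h‖
      ≤ cc * (‖h‖ * ‖h‖) := h1
    _ ≤ c * ‖h‖ := by
        have h4 : ‖h‖ * (cc+1) < c := (lt_div_iff₀ (by positivity)).1 h2
        nlinarith [mul_le_mul_of_nonneg_left h4.le h3, mul_nonneg h3 h3]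
end
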